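/- If n is odd, then no two-element subset of X is in the range of the top cycle correspondence: there is no profile u and no set S with |S| = 2 such that G_T(u) = S. -/

import Mathlib

open Finset

/-- The simple majority voting relation `x ≽_u y`:
`|{i : x ≻_{u(i)} y}| ≥ |{i : y ≻_{u(i)} x}|`.  A profile assigns to each
individual `i` a rank equivalence `u i : Fin m ≃ Fin m` (lower rank = better),
so `i` prefers `x` to `y` iff `(u i) x < (u i) y`. -/
def majGE {m n : ℕ} (u : Fin n → (Fin m ≃ Fin m)) (x y : Fin m) : Prop :=
  (univ.filter (fun i : Fin n => (u i) y < (u i) x)).card ≤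
    (univ.filter (fun i : Fin n => (u i) x < (u i) y)).card

/-- The top cycle `G_T(u)`: the set of alternatives that reach every
alternative via the transitive closure `R(u)` of the majority relation. -/
def topCycle {m n : ℕ} (u : Fin n → (Fin m ≃ Fin m)) : Set (Fin m) :=
  {x : Fin m | ∀ y : Fin m, Relation.TransGen (majGE u) x y}

/-- For an odd electorate, the majority relation is asymmetric off the
diagonal: `x` and `y` cannot tie. -/
lemma maj_not_both {m n : ℕ} (hno : Odd n) (u : Fin n → (Fin m ≃ Fin m))
    (x y : Fin m) (hxy : x ≠ y) : ¬ (majGE u x y ∧ majGE u y x) := by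
  rintro ⟨h1, h2⟩
  unfold majGE at h1 h2
  have heq := le_antisymm h1 h2
  have hsum : (univ.filter (fun i : Fin n => (u i) x < (u i) y)).card +
      (univ.filter (fun i : Fin n => (u i) y < (u i) x)).card = n := by
    have h := Finset.card_filter_add_card_filter_not
      (s := (univ : Finset (Fin n))) (p := fun i : Fin n => (u i) x < (u i) y)
    rw [Finset.card_univ, Fintype.card_fin] at h
    have hfe : (univ.filter (fun i : Fin n => (u i) y < (u i) x)) =
        (univ.filter (fun i : Fin n => ¬ (u i) x < (u i) y)) := by
      apply Finset.filter_congr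
      intro i _
      simp only [not_lt, eq_iff_iff]
      constructor
      · exact le_of_lt
      · intro h'
        refine lt_of_le_of_ne h' fun he => hxy ((u i).injective he.symm)
    rw [hfe]
    exact h
  rw [heq] at hsum
  have : Even n := ⟨_, hsum.symm⟩
  exact (Nat.not_even_iff_odd.mpr hno) this

/-- If `b` reaches `a` in the transitive closure but loses to `a` directly,
some third vertex lies on the path. -/
lemma reach_aux {m n : ℕ} (u : Fin n → (Fin m ≃ Fin m)) (a b : Fin m)
    (h : Relation.TransGen (majGE u) b a) :
    ¬ majGE u b a → ∃ z, z ≠ a ∧ z ≠ b ∧ Relation.TransGen (majGE u) z a := by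
  induction h using Relation.TransGen.head_induction_on with
  | single hba => exact fun hn => absurd hba hn
  | head hxc hca IH =>
      intro hn
      rename_i x c
      by_cases hcx : c = x
      · subst hcx; exact IH hn
      · by_cases hca' : c = a
        · subst hca'; exact absurd hxc hn
        · exact ⟨c, hca', hcx, hca⟩

/-- If `n` is odd, no two-element set is in the range of the top cycle
correspondence. -/
theorem topCycle_no_pair (m n : ℕ) (hm : 3 ≤ m) (hn : 2 ≤ n) (hno : Odd n) :
    ¬ ∃ (u : Fin n → (Fin m ≃ Fin m)) (S : Finset (Fin m)),
        S.card = 2 ∧ topCycle u = (S : Set (Fin m)) := by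
  rintro ⟨u, S, hS, hT⟩
  obtain ⟨a, b, hab, rfl⟩ := Finset.card_eq_two.mp hS
  have ha : a ∈ topCycle u := by rw [hT]; simp
  have hb : b ∈ topCycle u := by rw [hT]; simp
  have key : ∀ x y : Fin m, x ∈ topCycle u → y ∈ topCycle u → x ≠ y →
      ¬ majGE u y x → False := by
    intro x y hx hy hxy hnm
    have hx' : ∀ w, Relation.TransGen (majGE u) x w := hx
    have hy' : ∀ w, Relation.TransGen (majGE u) y w := hy
    obtain ⟨z, hzx, hzy, hz⟩ := reach_aux u x y (hy' x) hnm
    have hzT : z ∈ topCycle u := fun w => hz.trans (hx' w)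
    rw [hT] at hzT hx hy
    simp only [Finset.coe_insert, Finset.coe_singleton, Set.mem_insert_iff,
      Set.mem_singleton_iff] at hzT hx hy
    rcases hzT with rfl | rfl <;> rcases hx with rfl | rfl <;>
      rcases hy with rfl | rfl <;> simp_all
  have hnot := maj_not_both hno u a b hab
  by_cases h1 : majGE u a b
  · exact key a b ha hb hab (fun h2 => hnot ⟨h1, h2⟩)
  · exact key b a hb ha (Ne.symm hab) h1
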